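/- arXiv:2502.02797 — 3 statements merged into one kernel-verified Lean document; each statement's English description precedes it below -/
import Mathlib

section
/- Let α > 0 and let r ∈ ℝ^d be a unit vector. Define M = E[exp(-⟨r,z⟩²/α) z zᵀ] where z ~ N(0, I_d). Then r is an eigenvector of M with eigenvalue (α/(α+2))^{3/2}. -/
open MeasureTheory ProbabilityTheory Matrix

namespace Stmt3Aux
open MeasureTheory ProbabilityTheory Real Filter Set

lemma integrable_sq_exp {b : ℝ} (hb : 0 < b) :
    Integrable (fun x : ℝ => x ^ 2 * rexp (-b * x ^ 2)) := by
  have h := integrable_rpow_mul_exp_neg_mul_sq hb (by norm_num : (-1:ℝ) < 2)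
  have : ∀ x : ℝ, x ^ (2:ℝ) = x ^ (2:ℕ) := fun x => by
    rw [← Real.rpow_natCast x 2]; norm_num
  simpa [this] using h

lemma tendsto_mul_exp_top {b : ℝ} (hb : 0 < b) :
    Tendsto (fun x : ℝ => x * rexp (-b * x ^ 2)) atTop (nhds 0) := by
  have h := rpow_mul_exp_neg_mul_sq_isLittleO_exp_neg hb 1
  have h2 : Tendsto (fun x : ℝ => rexp (-(1/2) * x)) atTop (nhds 0) := by
    apply Real.tendsto_exp_atBot.comp
    apply Tendsto.const_mul_atTop_of_neg (by norm_num : -(1/2 : ℝ) < 0) tendsto_id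
  have h3 := h.trans_tendsto h2
  have : ∀ x : ℝ, x ^ (1:ℝ) = x := fun x => Real.rpow_one x
  simpa [this] using h3

lemma integral_sq_exp {b : ℝ} (hb : 0 < b) :
    ∫ x : ℝ, x ^ 2 * rexp (-b * x ^ 2) = (2 * b)⁻¹ * √(π / b) := by
  set F : ℝ → ℝ := fun x => -(2*b)⁻¹ * (x * rexp (-b * x ^ 2)) with hF
  set F' : ℝ → ℝ := fun x => x ^ 2 * rexp (-b * x ^ 2) - (2*b)⁻¹ * rexp (-b * x ^ 2) with hF'
  have hderiv : ∀ x : ℝ, HasDerivAt F (F' x) x := by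
    intro x
    have h1 : HasDerivAt (fun x : ℝ => -b * x ^ 2) (-b * (2 * x)) x := by
      simpa using ((hasDerivAt_pow 2 x).const_mul (-b))
    have h2 : HasDerivAt (fun x : ℝ => rexp (-b * x ^ 2)) (rexp (-b * x ^ 2) * (-b * (2 * x))) x :=
      h1.exp
    have h3 : HasDerivAt (fun x : ℝ => x * rexp (-b * x ^ 2))
        (1 * rexp (-b * x ^ 2) + x * (rexp (-b * x ^ 2) * (-b * (2 * x)))) x :=
      (hasDerivAt_id x).mul h2
    have h4 := h3.const_mul (-(2*b)⁻¹)
    refine h4.congr_deriv ?_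
    rw [hF']
    field_simp
    ring
  have hIe : Integrable (fun x : ℝ => rexp (-b * x ^ 2)) := integrable_exp_neg_mul_sq hb
  have hIsq := integrable_sq_exp hb
  have hIF' : Integrable F' := hIsq.sub (hIe.const_mul _)
  have htop : Tendsto F atTop (nhds 0) := by
    rw [hF]
    have := (tendsto_mul_exp_top hb).const_mul (-(2*b)⁻¹)
    rwa [mul_zero] at this
  have hbot : Tendsto F atBot (nhds 0) := by
    have h1 : Tendsto (fun x : ℝ => F (-x)) atTop (nhds 0) := by
      have he : (fun x : ℝ => F (-x)) = fun x => -F x := by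
        funext x; rw [hF]; simp only [neg_sq]; ring
      rw [he]
      simpa using htop.neg
    have := h1.comp tendsto_neg_atBot_atTop
    simpa [Function.comp_def, neg_neg] using this
  have hIoi : ∫ x in Ioi (0:ℝ), F' x = 0 - F 0 :=
    integral_Ioi_of_hasDerivAt_of_tendsto
      ((hderiv 0).continuousAt.continuousWithinAt)
      (fun x _ => hderiv x) hIF'.integrableOn htop
  have hIic : ∫ x in Iic (0:ℝ), F' x = F 0 - 0 :=
    integral_Iic_of_hasDerivAt_of_tendsto
      ((hderiv 0).continuousAt.continuousWithinAt)
      (fun x _ => hderiv x) hIF'.integrableOn hbot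
  have hzero : ∫ x : ℝ, F' x = 0 := by
    rw [← intervalIntegral.integral_Iic_add_Ioi hIF'.integrableOn hIF'.integrableOn, hIoi, hIic]
    ring
  have hsplit : ∫ x : ℝ, x ^ 2 * rexp (-b * x ^ 2)
      = ∫ x : ℝ, (F' x + (2*b)⁻¹ * rexp (-b * x ^ 2)) := by
    congr 1; funext x; rw [hF']; ring
  rw [hsplit, integral_add hIF' (hIe.const_mul _), hzero, integral_const_mul,
    integral_gaussian, zero_add]

lemma lintegral_pi_prod {n : ℕ} {E : Fin n → Type*} [∀ i, MeasurableSpace (E i)]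
    (μ : ∀ i, Measure (E i)) [∀ i, SigmaFinite (μ i)] {f : ∀ i, E i → ENNReal}
    (hf : ∀ i, Measurable (f i)) :
    ∫⁻ x, ∏ i, f i (x i) ∂(Measure.pi μ) = ∏ i, ∫⁻ x, f i x ∂(μ i) := by
  induction n with
  | zero => simp [lintegral_const, Measure.pi_empty_univ]
  | succ n ih =>
    have h := measurePreserving_piFinSuccAbove μ 0
    have key : ∫⁻ x, ∏ i, f i (x i) ∂(Measure.pi μ)
        = ∫⁻ p : E 0 × (∀ j : Fin n, E ((0 : Fin (n+1)).succAbove j)),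
            f 0 p.1 * ∏ j, f ((0 : Fin (n+1)).succAbove j) (p.2 j)
          ∂((μ 0).prod (Measure.pi fun j => μ ((0 : Fin (n+1)).succAbove j))) := by
      rw [← h.lintegral_comp_emb (MeasurableEquiv.piFinSuccAbove E 0).measurableEmbedding]
      congr 1
      funext x
      rw [Fin.prod_univ_succAbove (fun i => f i (x i)) 0]
      rfl
    rw [key]
    rw [lintegral_prod_mul (f := f 0)
      (g := fun w : ∀ j : Fin n, E ((0 : Fin (n+1)).succAbove j) =>
        ∏ j, f ((0 : Fin (n+1)).succAbove j) (w j)) (hf 0).aemeasurable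
      (Finset.measurable_prod _ (fun j _ => (hf _).comp (measurable_pi_apply j))).aemeasurable]
    rw [ih (fun j => μ _) (fun j => hf _), Fin.prod_univ_succAbove (fun i => ∫⁻ x, f i x ∂(μ i)) 0]

lemma pi_gaussian_eq (d : ℕ) :
    (Measure.pi fun _ : Fin d => gaussianReal 0 1)
      = (volume : Measure (Fin d → ℝ)).withDensity
          (fun z => ∏ i, gaussianPDF 0 1 (z i)) := by
  refine Measure.pi_eq (μ := fun _ : Fin d => gaussianReal 0 1) fun s hs => ?_
  rw [withDensity_apply _ (MeasurableSet.univ_pi hs)]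
  have : ∫⁻ z in Set.univ.pi s, ∏ i, gaussianPDF 0 1 (z i) ∂(volume : Measure (Fin d → ℝ))
      = ∫⁻ z, ∏ i, (s i).indicator (gaussianPDF 0 1) (z i) ∂(volume : Measure (Fin d → ℝ)) := by
    rw [← lintegral_indicator (MeasurableSet.univ_pi hs)]
    congr 1
    funext z
    by_cases hz : z ∈ Set.univ.pi s
    · rw [Set.indicator_of_mem hz]
      exact Finset.prod_congr rfl fun i _ => (Set.indicator_of_mem (hz i trivial) _).symm
    · rw [Set.indicator_of_notMem hz]
      rw [Set.mem_univ_pi] at hz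
      push_neg at hz
      obtain ⟨i, hi⟩ := hz
      exact (Finset.prod_eq_zero (Finset.mem_univ i) (Set.indicator_of_notMem hi _)).symm
  rw [this, volume_pi, lintegral_pi_prod (fun _ => volume)
    (fun i => (measurable_gaussianPDF 0 1).indicator (hs i))]
  exact Finset.prod_congr rfl fun i _ => by
    rw [lintegral_indicator (hs i), ← gaussianReal_apply 0 one_ne_zero]

lemma integral_pi_gaussian_eq (d : ℕ) (f : (Fin d → ℝ) → ℝ) :
    ∫ z, f z ∂(Measure.pi fun _ : Fin d => gaussianReal 0 1)
      = ∫ z, (∏ i, gaussianPDFReal 0 1 (z i)) * f z ∂(volume : Measure (Fin d → ℝ)) := by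
  have hnn : Measurable (fun z : Fin d → ℝ => ∏ i, (gaussianPDFReal 0 1 (z i)).toNNReal) :=
    Finset.measurable_prod _ fun i _ =>
      (measurable_gaussianPDFReal 0 1).real_toNNReal.comp (measurable_pi_apply i)
  have hd : (Measure.pi fun _ : Fin d => gaussianReal 0 1)
      = (volume : Measure (Fin d → ℝ)).withDensity
          (fun z => ((∏ i, (gaussianPDFReal 0 1 (z i)).toNNReal : NNReal) : ENNReal)) := by
    rw [pi_gaussian_eq d]
    congr 1
    funext z
    rw [ENNReal.coe_finset_prod]
    exact Finset.prod_congr rfl fun i _ => rfl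
  rw [hd, integral_withDensity_eq_integral_smul hnn f]
  congr 1
  funext z
  rw [NNReal.smul_def, NNReal.coe_prod]
  congr 1
  exact Finset.prod_congr rfl fun i _ => Real.coe_toNNReal _ (gaussianPDFReal_nonneg 0 1 (z i))

lemma pdf_eq : gaussianPDFReal 0 1 = fun x : ℝ => (√(2*π))⁻¹ * rexp (-(1/2) * x^2) := by
  funext x
  rw [gaussianPDFReal]
  norm_num
  exact Or.inl (by ring)

lemma integrable_one_add_sq_pdf :
    Integrable (fun x : ℝ => (1 + x^2) * gaussianPDFReal 0 1 x) := by
  have h : Integrable (fun x : ℝ =>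
      (√(2*π))⁻¹ * rexp (-(1/2) * x^2) + (√(2*π))⁻¹ * (x^2 * rexp (-(1/2) * x^2))) :=
    ((integrable_exp_neg_mul_sq (by norm_num : (0:ℝ) < 1/2)).const_mul _).add
      ((integrable_sq_exp (by norm_num : (0:ℝ) < 1/2)).const_mul _)
  exact h.congr (Filter.Eventually.of_forall fun x => by rw [pdf_eq]; ring)

lemma integral_pdf : ∫ x : ℝ, gaussianPDFReal 0 1 x = 1 :=
  integral_gaussianPDFReal_eq_one 0 one_ne_zero

lemma integral_id_pdf : ∫ x : ℝ, x * gaussianPDFReal 0 1 x = 0 := by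
  set g : ℝ → ℝ := fun x => x * gaussianPDFReal 0 1 x with hg
  have hodd : ∀ x, g (-x) = - g x := by
    intro x; rw [hg]; simp only [pdf_eq, neg_sq]; ring
  have h1 : ∫ x : ℝ, g (-x) = ∫ x : ℝ, g x := integral_neg_eq_self g volume
  have h2 : ∫ x : ℝ, g (-x) = - ∫ x : ℝ, g x := by
    rw [show (fun x : ℝ => g (-x)) = fun x => -g x from funext hodd, integral_neg]
  have := h1.symm.trans h2
  linarith

lemma integral_Aval {α : ℝ} (hα : 0 < α) :
    ∫ x : ℝ, (rexp (-x^2/α) * x) * (x * gaussianPDFReal 0 1 x)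
      = (α/(α+2)) ^ ((3:ℝ)/2) := by
  set β : ℝ := 1/α + 1/2 with hβ
  have hβpos : 0 < β := by rw [hβ]; positivity
  set t : ℝ := α/(α+2) with ht
  have htpos : 0 < t := by rw [ht]; positivity
  have hβt : β = (2*t)⁻¹ := by rw [hβ, ht]; field_simp; ring
  have hpoint : ∀ x : ℝ, (rexp (-x^2/α) * x) * (x * gaussianPDFReal 0 1 x)
      = (√(2*π))⁻¹ * (x^2 * rexp (-β * x^2)) := by
    intro x
    rw [pdf_eq]
    have hexp : rexp (-x^2/α) * rexp (-(1/2) * x^2) = rexp (-β * x^2) := by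
      rw [← Real.exp_add]; congr 1; rw [hβ]; field_simp; ring
    calc (rexp (-x^2/α) * x) * (x * ((√(2*π))⁻¹ * rexp (-(1/2) * x^2)))
        = (√(2*π))⁻¹ * (x^2 * (rexp (-x^2/α) * rexp (-(1/2) * x^2))) := by ring
      _ = (√(2*π))⁻¹ * (x^2 * rexp (-β * x^2)) := by rw [hexp]
  rw [show (fun x : ℝ => (rexp (-x^2/α) * x) * (x * gaussianPDFReal 0 1 x))
      = fun x : ℝ => (√(2*π))⁻¹ * (x^2 * rexp (-β * x^2)) from funext hpoint]
  rw [integral_const_mul, integral_sq_exp hβpos]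
  have h2β : (2*β)⁻¹ = t := by rw [hβt]; field_simp
  have hsq : π / β = (2*π) * t := by rw [hβt]; field_simp
  rw [h2β, hsq, Real.sqrt_mul (by positivity) t]
  have hs2π : (0:ℝ) < √(2*π) := Real.sqrt_pos.mpr (by positivity)
  rw [show (3:ℝ)/2 = 1 + 1/2 by norm_num, Real.rpow_add htpos, Real.rpow_one,
    ← Real.sqrt_eq_rpow]
  field_simp

lemma abs_le_one_add_sq (a : ℝ) : |a| ≤ 1 + a^2 := by
  rcases abs_cases a with ⟨h, _⟩ | ⟨h, _⟩ <;> nlinarith [sq_nonneg (a-1), sq_nonneg (a+1)]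

lemma abs_mul_le_prod {d : ℕ} (z : Fin d → ℝ) (i j : Fin d) :
    |z i * z j| ≤ ∏ k, (1 + (z k)^2) := by
  have hone : ∀ s : Finset (Fin d), (1:ℝ) ≤ ∏ k ∈ s, (1 + (z k)^2) := by
    intro s
    have := Finset.prod_le_prod (s := s) (f := fun _ => (1:ℝ)) (g := fun k => 1 + (z k)^2)
      (fun _ _ => zero_le_one) (fun k _ => show (1:ℝ) ≤ 1 + (z k)^2 by nlinarith [sq_nonneg (z k)])
    simpa using this
  rcases eq_or_ne i j with rfl | hij
  · have he : (1 + (z i)^2) * ∏ x ∈ Finset.univ.erase i, (1 + (z x)^2) = ∏ x, (1 + (z x)^2) :=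
      Finset.mul_prod_erase Finset.univ (fun k => 1 + (z k)^2) (Finset.mem_univ i)
    have habs : |z i * z i| = (z i)^2 := by rw [abs_mul, ← sq, sq_abs]
    rw [habs, ← he]
    nlinarith [hone (Finset.univ.erase i), sq_nonneg (z i)]
  · have he1 : (1 + (z i)^2) * ∏ x ∈ Finset.univ.erase i, (1 + (z x)^2) = ∏ x, (1 + (z x)^2) :=
      Finset.mul_prod_erase Finset.univ (fun k => 1 + (z k)^2) (Finset.mem_univ i)
    have hj : j ∈ Finset.univ.erase i := Finset.mem_erase.mpr ⟨hij.symm, Finset.mem_univ j⟩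
    have he2 : (1 + (z j)^2) * ∏ x ∈ (Finset.univ.erase i).erase j, (1 + (z x)^2)
        = ∏ x ∈ Finset.univ.erase i, (1 + (z x)^2) :=
      Finset.mul_prod_erase (Finset.univ.erase i) (fun k => 1 + (z k)^2) hj
    rw [← he1, ← he2, abs_mul]
    have h4 : |z i| * |z j| ≤ (1 + (z i)^2) * (1 + (z j)^2) :=
      mul_le_mul (abs_le_one_add_sq _) (abs_le_one_add_sq _) (abs_nonneg _)
        (by nlinarith [sq_nonneg (z i)])
    have h5 : (1 + (z i)^2) * (1 + (z j)^2)
        ≤ (1 + (z i)^2) * (1 + (z j)^2) * ∏ k ∈ (Finset.univ.erase i).erase j, (1 + (z k)^2) :=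
      le_mul_of_one_le_right (by positivity) (hone _)
    calc |z i| * |z j| ≤ (1 + (z i)^2) * (1 + (z j)^2) := h4
      _ ≤ (1 + (z i)^2) * (1 + (z j)^2) * ∏ k ∈ (Finset.univ.erase i).erase j, (1 + (z k)^2) := h5
      _ = (1 + (z i)^2) * ((1 + (z j)^2) * ∏ k ∈ (Finset.univ.erase i).erase j, (1 + (z k)^2)) := by
          ring

end Stmt3Aux

open Stmt3Aux in
/-- Lemma (FLOW): for a unit vector `r` and `z ~ N(0, I_d)`, the matrix
`M = E[exp(-⟨r,z⟩²/α) z zᵀ]` has `r` as an eigenvector with eigenvalue `(α/(α+2))^{3/2}`. -/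
theorem stmt_3 (d : ℕ) (α : ℝ) (hα : 0 < α)
    (r : Fin d → ℝ) (hr : r ⬝ᵥ r = 1)
    (M : Matrix (Fin d) (Fin d) ℝ)
    (hM : ∀ i j, M i j =
      ∫ z : Fin d → ℝ, Real.exp (-(r ⬝ᵥ z) ^ 2 / α) * (z i * z j)
        ∂(Measure.pi fun _ : Fin d => gaussianReal 0 1)) :
    M.mulVec r = ((α / (α + 2)) ^ ((3 : ℝ) / 2)) • r := by
  rcases Nat.eq_zero_or_pos d with hd0 | hdpos
  · subst hd0
    simp [dotProduct] at hr
  set i0 : Fin d := ⟨0, hdpos⟩ with hi0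
  -- Euclidean setup
  set rE : EuclideanSpace ℝ (Fin d) := (WithLp.equiv 2 (Fin d → ℝ)).symm r with hrEdef
  have hnormrE : ‖rE‖ = 1 := by
    rw [EuclideanSpace.norm_eq]
    have h : ∑ m, ‖rE m‖^2 = r ⬝ᵥ r := by
      rw [dotProduct]
      exact Finset.sum_congr rfl fun m _ => by
        rw [Real.norm_eq_abs, sq_abs]; rw [sq]; rfl
    rw [h, hr, Real.sqrt_one]
  have horth : Orthonormal ℝ (Set.restrict {i0} (fun _ : Fin d => rE)) := by
    constructor
    · intro m; exact hnormrE
    · intro m n hmn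
      exact absurd (Subtype.ext ((Set.eq_of_mem_singleton m.2).trans
        (Set.eq_of_mem_singleton n.2).symm)) hmn
  obtain ⟨b, hbext⟩ := horth.exists_orthonormalBasis_extension_of_card_eq (by simp)
  have hbi0 : b i0 = rE := hbext i0 rfl
  -- the rotation
  set Q : (Fin d → ℝ) → (Fin d → ℝ) :=
    fun y => WithLp.equiv 2 (Fin d → ℝ)
      (b.repr.symm ((WithLp.equiv 2 (Fin d → ℝ)).symm y)) with hQdef
  have hQmp : MeasurePreserving Q volume volume :=
    (PiLp.volume_preserving_ofLp (Fin d)).comp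
      ((b.measurePreserving_repr_symm).comp (PiLp.volume_preserving_toLp (Fin d)))
  have hemb : MeasurableEmbedding Q := by
    let HQ : (Fin d → ℝ) ≃ₜ (Fin d → ℝ) :=
      ((PiLp.continuousLinearEquiv 2 ℝ (fun _ : Fin d => ℝ)).symm.toHomeomorph).trans
        ((b.repr.symm.toHomeomorph).trans
          (PiLp.continuousLinearEquiv 2 ℝ (fun _ : Fin d => ℝ)).toHomeomorph)
    exact HQ.measurableEmbedding
  have hQapp : ∀ (y : Fin d → ℝ) (m : Fin d), Q y m = ∑ k, y k * (b k) m := by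
    intro y m
    have h1 : (∑ k, ((WithLp.equiv 2 (Fin d → ℝ)).symm y) k • b k)
        = b.repr.symm ((WithLp.equiv 2 (Fin d → ℝ)).symm y) :=
      OrthonormalBasis.sum_repr_symm b _
    have h2 : Q y m
        = (WithLp.linearEquiv 2 ℝ (Fin d → ℝ))
            (∑ k, ((WithLp.equiv 2 (Fin d → ℝ)).symm y) k • b k) m := by
      rw [h1]; rfl
    rw [h2, map_sum, Finset.sum_apply]
    exact Finset.sum_congr rfl fun k _ => by
      rw [_root_.map_smul]; simp only [Pi.smul_apply, smul_eq_mul]; rfl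
  have hQdot : ∀ y : Fin d → ℝ, r ⬝ᵥ Q y = y i0 := by
    intro y
    have h1 : r ⬝ᵥ Q y
        = (inner ℝ rE (b.repr.symm ((WithLp.equiv 2 (Fin d → ℝ)).symm y)) : ℝ) := by
      rw [PiLp.inner_apply]
      simp only [RCLike.inner_apply, conj_trivial]
      exact Finset.sum_congr rfl fun x _ => mul_comm _ _
    rw [h1, ← hbi0, ← OrthonormalBasis.repr_apply_apply,
      LinearIsometryEquiv.apply_symm_apply]
    rfl
  have hQnorm : ∀ y : Fin d → ℝ, ∑ k, (Q y k)^2 = ∑ k, (y k)^2 := by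
    intro y
    have h1 : ‖b.repr.symm ((WithLp.equiv 2 (Fin d → ℝ)).symm y)‖
        = ‖(WithLp.equiv 2 (Fin d → ℝ)).symm y‖ := b.repr.symm.norm_map _
    rw [EuclideanSpace.norm_eq, EuclideanSpace.norm_eq] at h1
    have h2 := (Real.sqrt_inj (by positivity) (by positivity)).mp h1
    calc ∑ k, (Q y k)^2
        = ∑ k, ‖(b.repr.symm ((WithLp.equiv 2 (Fin d → ℝ)).symm y)) k‖^2 :=
          Finset.sum_congr rfl fun k _ => by rw [Real.norm_eq_abs, sq_abs]; rfl
      _ = ∑ k, ‖((WithLp.equiv 2 (Fin d → ℝ)).symm y) k‖^2 := h2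
      _ = ∑ k, (y k)^2 :=
          Finset.sum_congr rfl fun k _ => by rw [Real.norm_eq_abs, sq_abs]; rfl
  -- density facts
  have hDrexp : ∀ z : Fin d → ℝ, (∏ k, gaussianPDFReal 0 1 (z k))
      = ((Real.sqrt (2*Real.pi))⁻¹)^d * Real.exp (-(1/2) * ∑ k, (z k)^2) := by
    intro z
    simp only [pdf_eq]
    rw [Finset.prod_mul_distrib, Finset.prod_const, ← Real.exp_sum,
      Finset.card_univ, Fintype.card_fin]
    congr 1
    rw [Finset.mul_sum]
  have hDrQ : ∀ y : Fin d → ℝ, (∏ k, gaussianPDFReal 0 1 (Q y k))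
      = ∏ k, gaussianPDFReal 0 1 (y k) := by
    intro y
    rw [hDrexp, hDrexp, hQnorm]
  have hDrnn : ∀ z : Fin d → ℝ, 0 ≤ ∏ k, gaussianPDFReal 0 1 (z k) :=
    fun z => Finset.prod_nonneg fun k _ => gaussianPDFReal_nonneg 0 1 (z k)
  -- measurability
  have hpdf_meas : Measurable (gaussianPDFReal 0 1) := measurable_gaussianPDFReal 0 1
  have hDr_meas : Measurable (fun z : Fin d → ℝ => ∏ k, gaussianPDFReal 0 1 (z k)) :=
    Finset.measurable_prod _ fun k _ => hpdf_meas.comp (measurable_pi_apply k)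
  have hdot_meas : Measurable fun z : Fin d → ℝ => r ⬝ᵥ z := by
    simp only [dotProduct]
    exact Finset.measurable_sum _ fun j _ => by fun_prop
  have hexp_meas : Measurable fun z : Fin d → ℝ => Real.exp (-(r ⬝ᵥ z)^2/α) :=
    Real.measurable_exp.comp ((hdot_meas.pow_const 2).neg.div_const α)
  have hexp_bound : ∀ z : Fin d → ℝ, |Real.exp (-(r ⬝ᵥ z)^2/α)| ≤ 1 := by
    intro z
    rw [abs_of_nonneg (Real.exp_nonneg _)]
    rw [Real.exp_le_one_iff]
    exact div_nonpos_of_nonpos_of_nonneg (neg_nonpos.mpr (sq_nonneg _)) hα.le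
  have hexp0_meas : Measurable fun y : Fin d → ℝ => Real.exp (-(y i0)^2/α) :=
    Real.measurable_exp.comp (by fun_prop)
  have hexp0_bound : ∀ y : Fin d → ℝ, |Real.exp (-(y i0)^2/α)| ≤ 1 := by
    intro y
    rw [abs_of_nonneg (Real.exp_nonneg _)]
    rw [Real.exp_le_one_iff]
    exact div_nonpos_of_nonpos_of_nonneg (neg_nonpos.mpr (sq_nonneg _)) hα.le
  -- integrability
  have hP : Integrable (fun z : Fin d → ℝ => ∏ k, ((1 + (z k)^2) * gaussianPDFReal 0 1 (z k)))
      (volume : Measure (Fin d → ℝ)) :=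
    Integrable.fintype_prod (𝕜 := ℝ)
      (f := fun _ : Fin d => fun x : ℝ => (1 + x^2) * gaussianPDFReal 0 1 x)
      (fun _ => integrable_one_add_sq_pdf)
  have key_int : ∀ (g : (Fin d → ℝ) → ℝ), Measurable g → (∀ z, |g z| ≤ 1) →
      ∀ (i j : Fin d), Integrable
        (fun z : Fin d → ℝ => (∏ k, gaussianPDFReal 0 1 (z k)) * (g z * (z i * z j)))
        (volume : Measure (Fin d → ℝ)) := by
    intro g hgm hgb i j
    refine hP.mono ((hDr_meas.mul (hgm.mul
      ((measurable_pi_apply i).mul (measurable_pi_apply j)))).aestronglyMeasurable)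
      (Filter.Eventually.of_forall fun z => ?_)
    rw [Real.norm_eq_abs, Real.norm_eq_abs]
    have h4 : |g z| * |z i * z j| ≤ ∏ k, (1 + (z k)^2) := by
      calc |g z| * |z i * z j| ≤ 1 * ∏ k, (1 + (z k)^2) :=
            mul_le_mul (hgb z) (abs_mul_le_prod z i j) (abs_nonneg _) zero_le_one
        _ = _ := one_mul _
    calc |(∏ k, gaussianPDFReal 0 1 (z k)) * (g z * (z i * z j))|
        = (∏ k, gaussianPDFReal 0 1 (z k)) * (|g z| * |z i * z j|) := by
          rw [abs_mul, abs_mul, abs_of_nonneg (hDrnn z)]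
      _ ≤ (∏ k, gaussianPDFReal 0 1 (z k)) * ∏ k, (1 + (z k)^2) :=
          mul_le_mul_of_nonneg_left h4 (hDrnn z)
      _ = |∏ k, ((1 + (z k)^2) * gaussianPDFReal 0 1 (z k))| := by
          rw [abs_of_nonneg (Finset.prod_nonneg fun k _ =>
            mul_nonneg (by positivity) (gaussianPDFReal_nonneg 0 1 (z k))),
            Finset.prod_mul_distrib]
          ring
  -- start the computation
  funext i
  rw [Pi.smul_apply, smul_eq_mul]
  have hmv : M.mulVec r i = ∑ j, M i j * r j := by
    simp [Matrix.mulVec, dotProduct]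
  have hconv : ∀ j, M i j = ∫ z, (∏ k, gaussianPDFReal 0 1 (z k)) *
      (Real.exp (-(r ⬝ᵥ z)^2/α) * (z i * z j)) ∂(volume : Measure (Fin d → ℝ)) := by
    intro j
    rw [hM i j, integral_pi_gaussian_eq d (fun z => Real.exp (-(r ⬝ᵥ z)^2/α) * (z i * z j))]
  have hswap1 : ∑ j, M i j * r j
      = ∫ z, (∏ k, gaussianPDFReal 0 1 (z k)) *
          (Real.exp (-(r ⬝ᵥ z)^2/α) * (z i * (r ⬝ᵥ z))) ∂(volume : Measure (Fin d → ℝ)) := by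
    calc ∑ j, M i j * r j
        = ∑ j, ∫ z, (∏ k, gaussianPDFReal 0 1 (z k)) *
            (Real.exp (-(r ⬝ᵥ z)^2/α) * (z i * z j)) * r j ∂(volume : Measure (Fin d → ℝ)) := by
          refine Finset.sum_congr rfl fun j _ => ?_
          rw [hconv j, ← integral_mul_const]
      _ = ∫ z, ∑ j, (∏ k, gaussianPDFReal 0 1 (z k)) *
            (Real.exp (-(r ⬝ᵥ z)^2/α) * (z i * z j)) * r j ∂(volume : Measure (Fin d → ℝ)) :=
          (integral_finset_sum _ (fun j _ =>
            (key_int _ hexp_meas hexp_bound i j).mul_const (r j))).symm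
      _ = _ := by
          congr 1; funext z
          simp only [dotProduct, Finset.mul_sum]
          exact Finset.sum_congr rfl fun j _ => by ring
  have hsub : ∫ z, (∏ k, gaussianPDFReal 0 1 (z k)) *
        (Real.exp (-(r ⬝ᵥ z)^2/α) * (z i * (r ⬝ᵥ z))) ∂(volume : Measure (Fin d → ℝ))
      = ∫ y, (∏ k, gaussianPDFReal 0 1 (y k)) *
          (Real.exp (-(y i0)^2/α) * ((∑ k, y k * (b k) i) * y i0))
            ∂(volume : Measure (Fin d → ℝ)) := by
    rw [← hQmp.integral_comp hemb (fun z => (∏ k, gaussianPDFReal 0 1 (z k)) *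
      (Real.exp (-(r ⬝ᵥ z)^2/α) * (z i * (r ⬝ᵥ z))))]
    congr 1; funext y
    rw [hDrQ y, hQdot y, hQapp y i]
  have hswap2 : ∫ y, (∏ k, gaussianPDFReal 0 1 (y k)) *
        (Real.exp (-(y i0)^2/α) * ((∑ k, y k * (b k) i) * y i0))
          ∂(volume : Measure (Fin d → ℝ))
      = ∑ k, (b k) i * ∫ y, (∏ m, gaussianPDFReal 0 1 (y m)) *
          (Real.exp (-(y i0)^2/α) * (y k * y i0)) ∂(volume : Measure (Fin d → ℝ)) := by
    have hpt : (fun y : Fin d → ℝ => (∏ k, gaussianPDFReal 0 1 (y k)) *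
        (Real.exp (-(y i0)^2/α) * ((∑ k, y k * (b k) i) * y i0)))
        = fun y => ∑ k, (b k) i * ((∏ m, gaussianPDFReal 0 1 (y m)) *
            (Real.exp (-(y i0)^2/α) * (y k * y i0))) := by
      funext y
      simp only [Finset.sum_mul, Finset.mul_sum]
      exact Finset.sum_congr rfl fun k _ => by ring
    rw [hpt, integral_finset_sum _ (fun k _ =>
      (key_int _ hexp0_meas hexp0_bound k i0).const_mul ((b k) i))]
    exact Finset.sum_congr rfl fun k _ => integral_const_mul _ _
  have hfac : ∀ k : Fin d,
      (∫ y, (∏ m, gaussianPDFReal 0 1 (y m)) *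
        (Real.exp (-(y i0)^2/α) * (y k * y i0)) ∂(volume : Measure (Fin d → ℝ)))
      = ∏ m, ∫ x : ℝ, (if m = i0 then Real.exp (-x^2/α) * x else 1) *
          ((if m = k then x else 1) * gaussianPDFReal 0 1 x) := by
    intro k
    have hpt : (fun y : Fin d → ℝ => (∏ m, gaussianPDFReal 0 1 (y m)) *
        (Real.exp (-(y i0)^2/α) * (y k * y i0)))
        = fun y => ∏ m, ((if m = i0 then Real.exp (-(y m)^2/α) * (y m) else 1) *
            ((if m = k then y m else 1) * gaussianPDFReal 0 1 (y m))) := by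
      funext y
      rw [Finset.prod_mul_distrib, Finset.prod_mul_distrib,
        Finset.prod_ite_eq' Finset.univ i0 (fun m => Real.exp (-(y m)^2/α) * (y m)),
        Finset.prod_ite_eq' Finset.univ k (fun m => y m)]
      simp only [Finset.mem_univ, if_true]
      ring
    rw [hpt]
    exact integral_fintype_prod_eq_prod
      (fun m x => (if m = i0 then Real.exp (-x^2/α) * x else 1) *
        ((if m = k then x else 1) * gaussianPDFReal 0 1 x))
  have hJ0 : ∀ k : Fin d, k ≠ i0 →
      (∫ y, (∏ m, gaussianPDFReal 0 1 (y m)) *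
        (Real.exp (-(y i0)^2/α) * (y k * y i0)) ∂(volume : Measure (Fin d → ℝ))) = 0 := by
    intro k hk
    rw [hfac k]
    refine Finset.prod_eq_zero (Finset.mem_univ k) ?_
    have hpt : (fun x : ℝ => (if k = i0 then Real.exp (-x^2/α) * x else 1) *
        ((if k = k then x else 1) * gaussianPDFReal 0 1 x))
        = fun x => x * gaussianPDFReal 0 1 x := by
      funext x; rw [if_neg hk, if_pos rfl, one_mul]
    rw [hpt, integral_id_pdf]
  have hJi0 : (∫ y, (∏ m, gaussianPDFReal 0 1 (y m)) *
        (Real.exp (-(y i0)^2/α) * (y i0 * y i0)) ∂(volume : Measure (Fin d → ℝ)))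
      = (α/(α+2)) ^ ((3:ℝ)/2) := by
    rw [hfac i0]
    rw [Finset.prod_eq_single i0 (fun m _ hm => by
        have hpt : (fun x : ℝ => (if m = i0 then Real.exp (-x^2/α) * x else 1) *
            ((if m = i0 then x else 1) * gaussianPDFReal 0 1 x))
            = fun x => gaussianPDFReal 0 1 x := by
          funext x; rw [if_neg hm, if_neg hm, one_mul, one_mul]
        rw [hpt, integral_pdf])
      (fun h => absurd (Finset.mem_univ i0) h)]
    have hpt : (fun x : ℝ => (if i0 = i0 then Real.exp (-x^2/α) * x else 1) *
        ((if i0 = i0 then x else 1) * gaussianPDFReal 0 1 x))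
        = fun x => (Real.exp (-x^2/α) * x) * (x * gaussianPDFReal 0 1 x) := by
      funext x; rw [if_pos rfl, if_pos rfl]
    rw [hpt, integral_Aval hα]
  -- final assembly
  rw [hmv, hswap1, hsub, hswap2]
  rw [Finset.sum_eq_single i0 (fun k _ hk => by rw [hJ0 k hk, mul_zero])
    (fun h => absurd (Finset.mem_univ i0) h), hJi0]
  have hbi : (b i0) i = r i := by rw [hbi0]; rfl
  rw [hbi, mul_comm]
end

section
/- Let e, e_⊥ be orthonormal vectors in ℝ^d, ρ ∈ [0,1), x̃ ~ N(0, Σ̃) with Σ̃ = I_d + ρ(e e_⊥ᵀ + e_⊥ eᵀ), α > 0, and μ = (α/(α+2))^{1/2}. Then E[exp(-⟨e, x̃⟩²/α) x̃ x̃ᵀ] = μ(I_d - (1-μ²) e eᵀ - ρ²(1-μ²) e_⊥ e_⊥ᵀ + ρμ²(e e_⊥ᵀ + e_⊥ eᵀ)). -/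
open MeasureTheory ProbabilityTheory Matrix Real
open scoped ENNReal NNReal


-- real line gaussian integrals
lemma aux_int_odd {b : ℝ} (hb : 0 < b) : ∫ x : ℝ, x * rexp (-b * x ^ 2) = 0 := by
  have hderiv : ∀ x : ℝ, HasDerivAt (fun x : ℝ => -(2*b)⁻¹ * rexp (-b * x ^ 2))
      (x * rexp (-b * x ^ 2)) x := by
    intro x
    refine (((hasDerivAt_pow 2 x).const_mul (-b)).exp.const_mul (-(2*b)⁻¹)).congr_deriv ?_
    field_simp
    ring
  have h := integral_eq_zero_of_hasDerivAt_of_integrable hderiv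
    (integrable_mul_exp_neg_mul_sq hb)
    ((integrable_exp_neg_mul_sq hb).const_mul _)
  exact h

lemma aux_int_sq {b : ℝ} (hb : 0 < b) :
    ∫ x : ℝ, x ^ 2 * rexp (-b * x ^ 2) = √(π / b) / (2 * b) := by
  have hint2 : Integrable (fun x : ℝ => x ^ 2 * rexp (-b * x ^ 2)) := by
    have := integrable_rpow_mul_exp_neg_mul_sq hb (s := 2) (by norm_num)
    simpa [Real.rpow_natCast] using this
  have hderiv : ∀ x : ℝ, HasDerivAt (fun x : ℝ => x * rexp (-b * x ^ 2))
      (rexp (-b * x ^ 2) - 2 * b * (x ^ 2 * rexp (-b * x ^ 2))) x := by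
    intro x
    have h1 : HasDerivAt (fun x : ℝ => rexp (-b * x ^ 2)) (rexp (-b * x ^ 2) * (-b * (2 * x))) x := by
      convert ((hasDerivAt_pow 2 x).const_mul (-b)).exp using 1
      ring_nf
    have := (hasDerivAt_id x).mul h1
    simp only [id_eq, one_mul] at this
    refine this.congr_deriv ?_
    ring
  have h := integral_eq_zero_of_hasDerivAt_of_integrable hderiv
    (((integrable_exp_neg_mul_sq hb).sub (hint2.const_mul (2*b))))
    (integrable_mul_exp_neg_mul_sq hb)
  rw [integral_sub (integrable_exp_neg_mul_sq hb) (hint2.const_mul (2*b)),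
    integral_gaussian, integral_const_mul, sub_eq_zero] at h
  rw [eq_div_iff (by positivity : (2:ℝ)*b ≠ 0)]
  linarith [h]

lemma aux_integral_gaussianReal (g : ℝ → ℝ) :
    ∫ x, g x ∂(gaussianReal 0 1) = ∫ x, gaussianPDFReal 0 1 x * g x := by
  rw [gaussianReal_of_var_ne_zero 0 one_ne_zero]
  have hmeas : Measurable fun x => (gaussianPDFReal 0 1 x).toNNReal :=
    (measurable_gaussianPDFReal 0 1).real_toNNReal
  have heq : gaussianPDF 0 1 = fun x => ((gaussianPDFReal 0 1 x).toNNReal : ℝ≥0∞) := rfl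
  rw [heq, integral_withDensity_eq_integral_smul hmeas]
  congr 1
  ext x
  simp [NNReal.smul_def, Real.coe_toNNReal _ (gaussianPDFReal_nonneg 0 1 x)]

lemma aux_integrable_gaussianReal_iff (g : ℝ → ℝ) :
    Integrable g (gaussianReal 0 1) ↔ Integrable (fun x => gaussianPDFReal 0 1 x * g x) := by
  rw [gaussianReal_of_var_ne_zero 0 one_ne_zero]
  have hmeas : Measurable fun x => (gaussianPDFReal 0 1 x).toNNReal :=
    (measurable_gaussianPDFReal 0 1).real_toNNReal
  have heq : gaussianPDF 0 1 = fun x => ((gaussianPDFReal 0 1 x).toNNReal : ℝ≥0∞) := rfl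
  rw [heq, integrable_withDensity_iff_integrable_smul hmeas]
  constructor <;> intro h <;> [skip; skip] <;>
  · refine h.congr (Filter.Eventually.of_forall fun x => ?_)
    simp [NNReal.smul_def, Real.coe_toNNReal _ (gaussianPDFReal_nonneg 0 1 x)]

lemma aux_pdf_eq (x : ℝ) :
    gaussianPDFReal 0 1 x = (√(2 * π))⁻¹ * rexp (-(1/2) * x ^ 2) := by
  simp only [gaussianPDFReal]
  norm_num
  exact Or.inl (by ring)
section
variable {c : ℝ} (hc : 0 ≤ c)

lemma aux_comb (p : ℝ → ℝ) (x : ℝ) :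
    gaussianPDFReal 0 1 x * (rexp (-c * x ^ 2) * p x)
      = (√(2 * π))⁻¹ * (p x * rexp (-(c + 1/2) * x ^ 2)) := by
  have h : rexp (-(c + 1/2) * x ^ 2) = rexp (-(1/2) * x ^ 2) * rexp (-c * x ^ 2) := by
    rw [← Real.exp_add]; ring_nf
  rw [aux_pdf_eq, h]; ring

include hc

lemma aux_gm0 : ∫ x, rexp (-c * x ^ 2) ∂(gaussianReal 0 1) = √(1 / (2 * c + 1)) := by
  have hb : (0:ℝ) < c + 1/2 := by linarith
  rw [aux_integral_gaussianReal]
  have : ∀ x : ℝ, gaussianPDFReal 0 1 x * rexp (-c * x ^ 2)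
      = (√(2 * π))⁻¹ * ((1:ℝ) * rexp (-(c + 1/2) * x ^ 2)) := by
    intro x; have := aux_comb (c := c) (fun _ => (1:ℝ)) x; simpa using this
  simp only [this, one_mul, integral_const_mul, integral_gaussian]
  rw [← Real.sqrt_inv, ← Real.sqrt_mul (by positivity)]
  congr 1
  field_simp

lemma aux_gm1 : ∫ x, rexp (-c * x ^ 2) * x ∂(gaussianReal 0 1) = 0 := by
  have hb : (0:ℝ) < c + 1/2 := by linarith
  rw [aux_integral_gaussianReal]
  simp only [aux_comb (c := c) (fun x => x)]
  rw [integral_const_mul, aux_int_odd hb, mul_zero]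

lemma aux_gm2 : ∫ x, rexp (-c * x ^ 2) * x ^ 2 ∂(gaussianReal 0 1)
    = √(1 / (2 * c + 1)) * (1 / (2 * c + 1)) := by
  have hb : (0:ℝ) < c + 1/2 := by linarith
  rw [aux_integral_gaussianReal]
  simp only [aux_comb (c := c) (fun x => x ^ 2)]
  rw [integral_const_mul, aux_int_sq hb]
  have h1 : (√(2*π))⁻¹ * √(π/(c+1/2)) = √(1/(2*c+1)) := by
    rw [← Real.sqrt_inv, ← Real.sqrt_mul (by positivity)]
    congr 1
    field_simp
  have h2 : (2:ℝ)*(c+1/2) = 2*c+1 := by ring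
  rw [div_eq_mul_inv, ← mul_assoc, h1, h2, one_div]

lemma aux_ig0 : Integrable (fun x => rexp (-c * x ^ 2)) (gaussianReal 0 1) := by
  have hb : (0:ℝ) < c + 1/2 := by linarith
  rw [aux_integrable_gaussianReal_iff]
  have : ∀ x : ℝ, gaussianPDFReal 0 1 x * rexp (-c * x ^ 2)
      = (√(2 * π))⁻¹ * ((1:ℝ) * rexp (-(c + 1/2) * x ^ 2)) := by
    intro x; have := aux_comb (c := c) (fun _ => (1:ℝ)) x; simpa using this
  simp only [this, one_mul]
  exact (integrable_exp_neg_mul_sq hb).const_mul _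

lemma aux_ig1 : Integrable (fun x => rexp (-c * x ^ 2) * x) (gaussianReal 0 1) := by
  have hb : (0:ℝ) < c + 1/2 := by linarith
  rw [aux_integrable_gaussianReal_iff]
  simp only [aux_comb (c := c) (fun x => x)]
  exact (integrable_mul_exp_neg_mul_sq hb).const_mul _

lemma aux_ig2 : Integrable (fun x => rexp (-c * x ^ 2) * x ^ 2) (gaussianReal 0 1) := by
  have hb : (0:ℝ) < c + 1/2 := by linarith
  rw [aux_integrable_gaussianReal_iff]
  simp only [aux_comb (c := c) (fun x => x ^ 2)]
  refine Integrable.const_mul ?_ _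
  have := integrable_rpow_mul_exp_neg_mul_sq hb (s := 2) (by norm_num)
  simpa [Real.rpow_natCast] using this

end


lemma aux_integral_pi_prod {ι : Type*} [Fintype ι] (m : Measure ℝ) [SigmaFinite m]
    (f : ι → ℝ → ℝ) :
    ∫ x : ι → ℝ, ∏ i, f i (x i) ∂(Measure.pi fun _ => m) = ∏ i, ∫ x, f i x ∂m := by
  letI : MeasureSpace ℝ := ⟨m⟩
  haveI : SigmaFinite (volume : Measure ℝ) := ‹_›
  exact MeasureTheory.integral_fintype_prod_eq_prod f

lemma aux_integrable_pi_prod {ι : Type*} [Fintype ι] (m : Measure ℝ) [SigmaFinite m]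
    (f : ι → ℝ → ℝ) (hf : ∀ i, Integrable (f i) m) :
    Integrable (fun x : ι → ℝ => ∏ i, f i (x i)) (Measure.pi fun _ => m) := by
  letI : MeasureSpace ℝ := ⟨m⟩
  haveI : SigmaFinite (volume : Measure ℝ) := ‹_›
  exact MeasureTheory.Integrable.fintype_prod hf

/-- Weighted covariance for the structured Gaussian: with `x̃ ~ N(0, Σ̃)`,
`Σ̃ = I + ρ(e e⊥ᵀ + e⊥ eᵀ)` (realized as `x̃ = T z` for iid standard Gaussian `z`),
`α > 0` and `μ = (α/(α+2))^{1/2}`, one has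
`E[exp(-⟨e,x̃⟩²/α) x̃ x̃ᵀ] = μ(I - (1-μ²) e eᵀ - ρ²(1-μ²) e⊥ e⊥ᵀ + ρμ²(e e⊥ᵀ + e⊥ eᵀ))`. -/
theorem stmt_8 (d : ℕ) (hd : 2 ≤ d)
    (b : Fin d → Fin d → ℝ)
    (hb : ∀ i j, b i ⬝ᵥ b j = if i = j then 1 else 0)
    (e eperp : Fin d → ℝ)
    (i0 i1 : Fin d) (hi0 : (i0 : ℕ) = 0) (hi1 : (i1 : ℕ) = 1)
    (hbe : b i0 = e) (hbeperp : b i1 = eperp)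
    (ρ : ℝ) (hρ0 : 0 ≤ ρ) (hρ1 : ρ < 1)
    (T : (Fin d → ℝ) → (Fin d → ℝ))
    (hT : ∀ z, T z = z i0 • e + (ρ * z i0 + Real.sqrt (1 - ρ ^ 2) * z i1) • eperp +
      ∑ j ∈ Finset.univ.filter (fun j : Fin d => 2 ≤ (j : ℕ)), z j • b j)
    (α : ℝ) (hα : 0 < α)
    (μ : ℝ) (hμ : μ = (α / (α + 2)) ^ ((1 : ℝ) / 2))
    (M : Matrix (Fin d) (Fin d) ℝ)
    (hM : ∀ i j, M i j =
      ∫ z : Fin d → ℝ, Real.exp (-(e ⬝ᵥ T z) ^ 2 / α) * (T z i * T z j)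
        ∂(Measure.pi fun _ : Fin d => gaussianReal 0 1)) :
    M = μ • ((1 : Matrix (Fin d) (Fin d) ℝ) - (1 - μ ^ 2) • vecMulVec e e
          - (ρ ^ 2 * (1 - μ ^ 2)) • vecMulVec eperp eperp
          + (ρ * μ ^ 2) • (vecMulVec e eperp + vecMulVec eperp e)) := by
  have hne : i0 ≠ i1 := fun h => by rw [h, hi1] at hi0; exact one_ne_zero hi0
  have hvi : ∀ j : Fin d, ¬ 2 ≤ (j:ℕ) ↔ (j = i0 ∨ j = i1) := by
    intro j
    rw [Fin.ext_iff, Fin.ext_iff, hi0, hi1]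
    omega
  set γ := gaussianReal 0 1 with hγ
  haveI : IsProbabilityMeasure γ := by rw [hγ]; infer_instance
  set s : ℝ := Real.sqrt (1 - ρ^2) with hs
  have hs2 : s^2 = 1 - ρ^2 := Real.sq_sqrt (by nlinarith)
  -- scalar facts
  have hαv : (0:ℝ) < α / (α + 2) := by positivity
  have hμv : μ = √(α / (α + 2)) := by rw [hμ, Real.sqrt_eq_rpow]
  have hμ2 : μ^2 = α / (α + 2) := by rw [hμv, Real.sq_sqrt hαv.le]
  have hca : (0:ℝ) ≤ 1/α := by positivity
  have h2c : 1 / (2 * (1/α) + 1) = α / (α + 2) := by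
    rw [div_eq_div_iff] <;> [skip; positivity; positivity]
    field_simp
    ring
  have hwfun : ∀ x : ℝ, rexp (-x^2/α) = rexp (-(1/α) * x^2) := fun x => by
    rw [show -x^2/α = -(1/α)*x^2 by ring]
  -- the coefficient vectors
  set c : Fin d → Fin d → ℝ := fun k =>
    if k = i0 then e + ρ • eperp else if k = i1 then s • eperp else b k with hcdef
  have hc0 : ∀ i, c i0 i = e i + ρ * eperp i := by
    intro i; rw [hcdef]; simp
  have hc1 : ∀ i, c i1 i = s * eperp i := by
    intro i; rw [hcdef]; simp [hne.symm]
  have hck : ∀ k : Fin d, 2 ≤ (k:ℕ) → c k = b k := by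
    intro k hk
    have h1 : k ≠ i0 := fun h => by simp [(hvi k).mpr (Or.inl h)] at hk
    have h2 : k ≠ i1 := fun h => by simp [(hvi k).mpr (Or.inr h)] at hk
    rw [hcdef]; simp [h1, h2]
  -- T in terms of c
  have hTc : ∀ z i, T z i = ∑ k, z k * c k i := by
    intro z i
    rw [hT z]
    rw [← Finset.sum_filter_add_sum_filter_not Finset.univ (fun j : Fin d => 2 ≤ (j:ℕ))
      (fun k => z k * c k i)]
    have hfilter : Finset.univ.filter (fun j : Fin d => ¬ 2 ≤ (j:ℕ)) = {i0, i1} := by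
      ext j
      simp only [Finset.mem_filter, Finset.mem_univ, true_and, Finset.mem_insert,
        Finset.mem_singleton]
      exact hvi j
    rw [hfilter, Finset.sum_pair hne]
    have hrest : ∀ k ∈ Finset.univ.filter (fun j : Fin d => 2 ≤ (j:ℕ)),
        z k * c k i = z k * b k i := by
      intro k hk
      rw [hck k (Finset.mem_filter.mp hk).2]
    rw [Finset.sum_congr rfl hrest]
    simp only [Pi.add_apply, Pi.smul_apply, smul_eq_mul, Finset.sum_apply]
    rw [hc0, hc1]
    ring
  -- e ⬝ᵥ T z = z i0
  have hbsum : ∀ i j, (∑ k, b i k * b j k) = if i = j then (1:ℝ) else 0 := by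
    intro i j
    have := hb i j
    simpa [dotProduct] using this
  have hedot : ∀ z : Fin d → ℝ, e ⬝ᵥ T z = z i0 := by
    intro z
    have hec : ∀ k, (∑ i, e i * c k i) = if k = i0 then (1:ℝ) else 0 := by
      intro k
      by_cases h0 : k = i0
      · subst h0
        simp only [hc0, if_pos rfl]
        have h1 : (∑ i, e i * (e i + ρ * eperp i))
            = (∑ i, e i * e i) + ρ * (∑ i, e i * eperp i) := by
          rw [Finset.mul_sum, ← Finset.sum_add_distrib]
          exact Finset.sum_congr rfl fun i _ => by ring
        rw [h1, ← hbe, ← hbeperp, hbsum, hbsum, if_pos rfl, if_neg hne]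
        simp
      · rw [if_neg h0]
        by_cases h1 : k = i1
        · subst h1
          simp only [hc1]
          have h2 : (∑ i, e i * (s * eperp i)) = s * (∑ i, e i * eperp i) := by
            rw [Finset.mul_sum]
            exact Finset.sum_congr rfl fun i _ => by ring
          rw [h2, ← hbe, ← hbeperp, hbsum, if_neg hne]
          simp
        · have hcb : c k = b k := by rw [hcdef]; simp [h0, h1]
          simp only [hcb]
          rw [← hbe, hbsum, if_neg (fun h => h0 h.symm)]
    have hstart : e ⬝ᵥ T z = ∑ i, e i * T z i := by simp [dotProduct]
    rw [hstart]
    calc ∑ i, e i * T z i = ∑ i, ∑ k, e i * (z k * c k i) := by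
          refine Finset.sum_congr rfl fun i _ => ?_
          rw [hTc z i, Finset.mul_sum]
      _ = ∑ k, ∑ i, e i * (z k * c k i) := Finset.sum_comm
      _ = ∑ k, z k * ∑ i, e i * c k i := by
          refine Finset.sum_congr rfl fun k _ => ?_
          rw [Finset.mul_sum]
          exact Finset.sum_congr rfl fun i _ => by ring
      _ = z i0 := by
          simp only [hec, mul_ite, mul_one, mul_zero]
          rw [Finset.sum_ite_eq' Finset.univ i0 (fun k => z k)]
          simp
  -- column orthonormality
  have hbb : ∀ i j, (∑ k, b k i * b k j) = if i = j then (1:ℝ) else 0 := by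
    have h1 : (Matrix.of b) * (Matrix.of b)ᵀ = 1 := by
      ext i j
      rw [Matrix.mul_apply, Matrix.one_apply]
      have := hb i j
      simpa [dotProduct] using this
    have h2 := mul_eq_one_comm.mp h1
    intro i j
    have h3 := congrFun (congrFun h2 i) j
    rw [Matrix.mul_apply, Matrix.one_apply] at h3
    simpa using h3
  have hS : ∀ i j, (∑ k, c k i * c k j)
      = (if i = j then (1:ℝ) else 0) + ρ * (e i * eperp j + eperp i * e j) := by
    intro i j
    rw [← Finset.sum_filter_add_sum_filter_not Finset.univ (fun j : Fin d => 2 ≤ (j:ℕ))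
      (fun k => c k i * c k j)]
    have hfilter : Finset.univ.filter (fun j : Fin d => ¬ 2 ≤ (j:ℕ)) = {i0, i1} := by
      ext j
      simp only [Finset.mem_filter, Finset.mem_univ, true_and, Finset.mem_insert,
        Finset.mem_singleton]
      exact hvi j
    rw [hfilter, Finset.sum_pair hne]
    have hrest : ∀ k ∈ Finset.univ.filter (fun j : Fin d => 2 ≤ (j:ℕ)),
        c k i * c k j = b k i * b k j := by
      intro k hk; rw [hck k (Finset.mem_filter.mp hk).2]
    rw [Finset.sum_congr rfl hrest]
    have hsplit : ∑ k ∈ Finset.univ.filter (fun j : Fin d => 2 ≤ (j:ℕ)), b k i * b k j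
        = (∑ k, b k i * b k j) - b i0 i * b i0 j - b i1 i * b i1 j := by
      rw [← Finset.sum_filter_add_sum_filter_not Finset.univ (fun j : Fin d => 2 ≤ (j:ℕ))
        (fun k => b k i * b k j), hfilter, Finset.sum_pair hne]
      ring
    rw [hsplit, hbb, hbe, hbeperp, hc0, hc0, hc1, hc1]
    have : s * eperp i * (s * eperp j) = (1 - ρ^2) * (eperp i * eperp j) := by
      rw [show s * eperp i * (s * eperp j) = s^2 * (eperp i * eperp j) by ring, hs2]
    rw [this]
    ring
  -- integrability of single-variable pieces over γ
  have iw : Integrable (fun x : ℝ => rexp (-x^2/α)) γ := by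
    simp only [hwfun]; exact aux_ig0 hca
  have iwx : Integrable (fun x : ℝ => rexp (-x^2/α) * x) γ := by
    simp only [hwfun]; exact aux_ig1 hca
  have iwxx : Integrable (fun x : ℝ => rexp (-x^2/α) * (x * x)) γ := by
    simp only [hwfun, ← pow_two]; exact aux_ig2 hca
  have ix : Integrable (fun x : ℝ => x) γ := by
    have := aux_ig1 (le_refl (0:ℝ))
    simpa using this
  have ixx : Integrable (fun x : ℝ => x * x) γ := by
    have := aux_ig2 (le_refl (0:ℝ))
    simp only [← pow_two]
    simpa using this
  -- integral values
  have vone : ∫ x, (1:ℝ) ∂γ = 1 := by simp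
  have vw : ∫ x, rexp (-x^2/α) ∂γ = μ := by
    simp only [hwfun]; rw [aux_gm0 hca, h2c, hμv]
  have vwx : ∫ x, rexp (-x^2/α) * x ∂γ = 0 := by
    simp only [hwfun]; exact aux_gm1 hca
  have vwxx : ∫ x, rexp (-x^2/α) * (x * x) ∂γ = μ^3 := by
    simp only [hwfun, ← pow_two]
    rw [aux_gm2 hca, h2c, ← hμv, ← hμ2]
    ring
  have vx : ∫ x, (x:ℝ) ∂γ = 0 := by
    have := aux_gm1 (le_refl (0:ℝ))
    simpa [hγ] using this
  have vxx : ∫ x, (x * x : ℝ) ∂γ = 1 := by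
    have := aux_gm2 (le_refl (0:ℝ))
    simp only [← pow_two]
    simpa using this
  -- the key integrals
  set G : Fin d → Fin d → Fin d → ℝ → ℝ := fun k l i x =>
    (if i = i0 then rexp (-x^2/α) else 1) *
      ((if i = k then x else 1) * (if i = l then x else 1)) with hG
  have hGprod : ∀ k l : Fin d, ∀ z : Fin d → ℝ,
      rexp (-(z i0)^2/α) * (z k * z l) = ∏ i, G k l i (z i) := by
    intro k l z
    rw [hG]
    simp only []
    rw [Finset.prod_mul_distrib, Finset.prod_mul_distrib,
      Finset.prod_ite_eq' Finset.univ i0 (fun i => rexp (-(z i)^2/α)),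
      Finset.prod_ite_eq' Finset.univ k (fun i => z i),
      Finset.prod_ite_eq' Finset.univ l (fun i => z i)]
    simp
  have hGint : ∀ k l i : Fin d, Integrable (G k l i) γ := by
    intro k l i
    rw [hG]
    simp only []
    split_ifs
    · simpa using iwxx
    · simpa using iwx
    · simpa using iwx
    · simpa using iw
    · simpa using ixx
    · simpa using ix
    · simpa using ix
    · simpa using integrable_const (1:ℝ)
  have K : ∀ k l : Fin d, (∫ z : Fin d → ℝ, rexp (-(z i0)^2/α) * (z k * z l)
      ∂(Measure.pi fun _ : Fin d => γ)) = if k = l then (if k = i0 then μ^3 else μ) else 0 := by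
    intro k l
    rw [integral_congr_ae (Filter.Eventually.of_forall (hGprod k l)),
      aux_integral_pi_prod γ (G k l)]
    by_cases hkl : k = l
    · subst hkl
      rw [if_pos rfl]
      by_cases hki : k = i0
      · rw [if_pos hki]
        rw [Finset.prod_eq_single i0
          (fun i _ hi => by
            rw [show (∫ x, G k k i x ∂γ) = ∫ x, (1:ℝ) ∂γ from
              integral_congr_ae (Filter.Eventually.of_forall fun x => by
                simp [hG, hi, show i ≠ k from fun h => hi (h.trans hki)])]
            exact vone)
          (fun h => absurd (Finset.mem_univ i0) h)]
        rw [show (∫ x, G k k i0 x ∂γ) = ∫ x, rexp (-x^2/α) * (x * x) ∂γ from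
          integral_congr_ae (Filter.Eventually.of_forall fun x => by
            simp [hG, hki.symm])]
        exact vwxx
      · rw [if_neg hki]
        have hki' : k ≠ i0 := hki
        rw [← Finset.mul_prod_erase Finset.univ _ (Finset.mem_univ i0),
          ← Finset.mul_prod_erase _ _
            (Finset.mem_erase.mpr ⟨hki', Finset.mem_univ k⟩),
          Finset.prod_eq_one (fun i hi => by
            have h1 : i ≠ k := (Finset.mem_erase.mp hi).1
            have h2 : i ≠ i0 := (Finset.mem_erase.mp (Finset.mem_erase.mp hi).2).1
            rw [show (∫ x, G k k i x ∂γ) = ∫ x, (1:ℝ) ∂γ from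
              integral_congr_ae (Filter.Eventually.of_forall fun x => by
                simp [hG, h1, h2])]
            exact vone)]
        rw [show (∫ x, G k k i0 x ∂γ) = ∫ x, rexp (-x^2/α) ∂γ from
          integral_congr_ae (Filter.Eventually.of_forall fun x => by
            simp [hG, show i0 ≠ k from fun h => hki h.symm])]
        rw [show (∫ x, G k k k x ∂γ) = ∫ x, (x * x : ℝ) ∂γ from
          integral_congr_ae (Filter.Eventually.of_forall fun x => by
            simp [hG, hki'])]
        rw [vw, vxx]
        ring
    · rw [if_neg hkl]
      by_cases hki : k = i0
      · have hli0 : l ≠ i0 := fun h => hkl (hki.trans h.symm)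
        have hlk : l ≠ k := fun h => hkl h.symm
        apply Finset.prod_eq_zero (Finset.mem_univ l)
        rw [show (∫ x, G k l l x ∂γ) = ∫ x, (x : ℝ) ∂γ from
          integral_congr_ae (Filter.Eventually.of_forall fun x => by
            simp [hG, hli0, hlk])]
        exact vx
      · apply Finset.prod_eq_zero (Finset.mem_univ k)
        rw [show (∫ x, G k l k x ∂γ) = ∫ x, (x : ℝ) ∂γ from
          integral_congr_ae (Filter.Eventually.of_forall fun x => by
            simp [hG, hki, hkl])]
        exact vx
  have hint : ∀ k l : Fin d, Integrable (fun z : Fin d → ℝ => rexp (-(z i0)^2/α) * (z k * z l))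
      (Measure.pi fun _ : Fin d => γ) := by
    intro k l
    rw [show (fun z : Fin d → ℝ => rexp (-(z i0)^2/α) * (z k * z l))
        = fun z : Fin d → ℝ => ∏ i, G k l i (z i) from funext (hGprod k l)]
    exact aux_integrable_pi_prod γ (G k l) (hGint k l)
  -- assembly
  funext i j
  rw [hM i j]
  have hintegrand : ∀ z : Fin d → ℝ, Real.exp (-(e ⬝ᵥ T z) ^ 2 / α) * (T z i * T z j)
      = ∑ k : Fin d, ∑ l : Fin d,
          (c k i * c l j) * (rexp (-(z i0)^2/α) * (z k * z l)) := by
    intro z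
    rw [hedot z, hTc z i, hTc z j, Finset.sum_mul_sum]
    rw [Finset.mul_sum]
    refine Finset.sum_congr rfl fun k _ => ?_
    rw [Finset.mul_sum]
    refine Finset.sum_congr rfl fun l _ => ?_
    ring
  calc (∫ z : Fin d → ℝ, Real.exp (-(e ⬝ᵥ T z) ^ 2 / α) * (T z i * T z j)
        ∂(Measure.pi fun _ : Fin d => γ))
      = ∫ z : Fin d → ℝ, ∑ k : Fin d, ∑ l : Fin d,
          (c k i * c l j) * (rexp (-(z i0)^2/α) * (z k * z l))
          ∂(Measure.pi fun _ : Fin d => γ) := by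
        exact integral_congr_ae (Filter.Eventually.of_forall hintegrand)
    _ = ∑ k : Fin d, ∑ l : Fin d, (c k i * c l j) *
          ∫ z : Fin d → ℝ, rexp (-(z i0)^2/α) * (z k * z l)
          ∂(Measure.pi fun _ : Fin d => γ) := by
        rw [integral_finset_sum _ (fun k _ => integrable_finset_sum _
          (fun l _ => (hint k l).const_mul _))]
        refine Finset.sum_congr rfl fun k _ => ?_
        rw [integral_finset_sum _ (fun l _ => (hint k l).const_mul _)]
        refine Finset.sum_congr rfl fun l _ => ?_
        exact integral_const_mul _ _
    _ = ∑ k : Fin d, (c k i * c k j) * (if k = i0 then μ^3 else μ) := by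
        refine Finset.sum_congr rfl fun k _ => ?_
        simp only [K, mul_ite, mul_zero]
        rw [Finset.sum_ite_eq]
        simp
    _ = μ * (∑ k, c k i * c k j) + (μ^3 - μ) * (c i0 i * c i0 j) := by
        have hterm : ∀ k : Fin d, (c k i * c k j) * (if k = i0 then μ^3 else μ)
            = μ * (c k i * c k j) + (if k = i0 then (μ^3 - μ) * (c k i * c k j) else 0) := by
          intro k; split_ifs <;> ring
        rw [Finset.sum_congr rfl fun k _ => hterm k, Finset.sum_add_distrib,
          ← Finset.mul_sum, Finset.sum_ite_eq' Finset.univ i0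
            (fun k => (μ^3 - μ) * (c k i * c k j))]
        simp
  rw [hS i j, hc0 i, hc0 j]
  simp only [Matrix.smul_apply, Matrix.sub_apply, Matrix.add_apply, Matrix.one_apply,
    Matrix.vecMulVec_apply, smul_eq_mul]
  ring
end

section
/- Let ρ ∈ [0,1), β ∈ (0,1], and μ = √(β(1-ρ²)/((1+β)(1-βρ²))). Let e, e_⊥ be orthonormal in ℝ^d and Q = (1-μ²) e eᵀ + ρ²(1-μ²) e_⊥ e_⊥ᵀ - ρμ²(e e_⊥ᵀ + e_⊥ eᵀ). Then Q has eigenvalues λ̂₁ = (1+βρ²)/(1+β) and λ̂₂ = ρ²(1-β)/(1-βρ²), with corresponding (unnormalized) eigenvectors e - βρ e_⊥ and -βρ e - e_⊥. -/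
open Matrix

lemma vecMulVec_mulVec' {d : ℕ} (a b v : Fin d → ℝ) :
    (vecMulVec a b).mulVec v = (b ⬝ᵥ v) • a := by
  ext i
  simp [mulVec, vecMulVec_apply, dotProduct, Finset.mul_sum, Finset.sum_mul, mul_comm,
    mul_assoc, mul_left_comm]

/-- Lemma 3 (FLOW): eigenvalues/eigenvectors of the rank-2 matrix `Q`. With
`μ = √(β(1-ρ²)/((1+β)(1-βρ²)))`, `Q = (1-μ²) e eᵀ + ρ²(1-μ²) e⊥ e⊥ᵀ - ρμ²(e e⊥ᵀ + e⊥ eᵀ)`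
has eigenvalues `λ̂₁ = (1+βρ²)/(1+β)` and `λ̂₂ = ρ²(1-β)/(1-βρ²)` with eigenvectors
`e - βρ e⊥` and `-βρ e - e⊥`. -/
theorem stmt_11 (d : ℕ)
    (e eperp : Fin d → ℝ) (he : e ⬝ᵥ e = 1) (heperp : eperp ⬝ᵥ eperp = 1)
    (horth : e ⬝ᵥ eperp = 0)
    (ρ β : ℝ) (hρ0 : 0 ≤ ρ) (hρ1 : ρ < 1) (hβ : β ∈ Set.Ioc (0 : ℝ) 1)
    (μ : ℝ) (hμ : μ = Real.sqrt (β * (1 - ρ ^ 2) / ((1 + β) * (1 - β * ρ ^ 2))))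
    (Q : Matrix (Fin d) (Fin d) ℝ)
    (hQ : Q = (1 - μ ^ 2) • vecMulVec e e + (ρ ^ 2 * (1 - μ ^ 2)) • vecMulVec eperp eperp
          - (ρ * μ ^ 2) • (vecMulVec e eperp + vecMulVec eperp e)) :
    Q.mulVec (e - (β * ρ) • eperp) = ((1 + β * ρ ^ 2) / (1 + β)) • (e - (β * ρ) • eperp) ∧
    Q.mulVec (-(β * ρ) • e - eperp) =
      (ρ ^ 2 * (1 - β) / (1 - β * ρ ^ 2)) • (-(β * ρ) • e - eperp) := by
  obtain ⟨hβ0, hβ1⟩ := hβ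
  have hρ2 : ρ ^ 2 < 1 := by nlinarith
  have hβρ2 : β * ρ ^ 2 < 1 := by nlinarith
  have h1 : (0:ℝ) < 1 + β := by linarith
  have h2 : (0:ℝ) < 1 - β * ρ ^ 2 := by linarith
  have hm : μ ^ 2 = β * (1 - ρ ^ 2) / ((1 + β) * (1 - β * ρ ^ 2)) := by
    rw [hμ, Real.sq_sqrt (div_nonneg (by nlinarith) (by positivity))]
  have hhorth' : eperp ⬝ᵥ e = 0 := by rw [dotProduct_comm]; exact horth
  have h2' : (1 - ρ ^ 2 * β) ≠ 0 := ne_of_gt (by nlinarith)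
  subst hQ
  constructor <;>
  · simp only [sub_mulVec, add_mulVec, smul_mulVec, vecMulVec_mulVec',
      dotProduct_sub, dotProduct_smul, dotProduct_neg, neg_smul, dotProduct_add,
      he, heperp, horth, hhorth', smul_eq_mul]
    match_scalars <;> field_simp <;> rw [hm] <;> field_simp <;> ring
end
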